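/- For any matrix M ∈ ℝ^{p×p}, any vectors u, v ∈ ℝ^p, and any integer k ≥ 1, |uᵀMv| ≤ (‖u‖₂ + ‖u‖₁/√k)·(‖v‖₂ + ‖v‖₁/√k)·‖M‖_{S_k}, where ‖M‖_{S_k} = max{ u'ᵀMv' : u',v' unit vectors with at most k nonzero entries }. -/

import Mathlib

open Matrix

/-- `u` is `k`-sparse: its support is contained in a set of at most `k` coordinates. -/
def kSparse {p : ℕ} (k : ℕ) (u : Fin p → ℝ) : Prop :=
  ∃ s : Finset (Fin p), s.card ≤ k ∧ ∀ i ∉ s, u i = 0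

/-- The sparse spectral norm `‖M‖_{S_k} = sup { uᵀMv : u,v ∈ S_k }`, where
`S_k` is the set of `k`-sparse vectors in the unit Euclidean ball. -/
noncomputable def sparseOpNorm (p k : ℕ) (M : Matrix (Fin p) (Fin p) ℝ) : ℝ :=
  sSup {x : ℝ | ∃ u v : Fin p → ℝ, (∑ i, (u i) ^ 2) ≤ 1 ∧ (∑ i, (v i) ^ 2) ≤ 1 ∧
    kSparse k u ∧ kSparse k v ∧ x = u ⬝ᵥ M.mulVec v}

open Finset

open Finset


lemma blocks_cover {k : ℕ} (q : ℕ) (f : ℕ → ℝ) :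
    ∑ j ∈ range q, ∑ n ∈ Finset.Ico (j*k) (j*k+k), f n = ∑ n ∈ range (q*k), f n := by
  induction q with
  | zero => simp
  | succ q ih =>
    rw [Finset.sum_range_succ, ih, show (q+1)*k = q*k+k by ring, Finset.range_eq_Ico, Finset.range_eq_Ico]
    exact Finset.sum_Ico_consecutive f (Nat.zero_le _) (Nat.le_add_right _ _)

lemma block_sqrt_le {k : ℕ} (hk : 1 ≤ k) (b : ℕ → ℝ) (hb0 : ∀ n, 0 ≤ b n)
    (hmono : ∀ ⦃m n : ℕ⦄, m ≤ n → b n ≤ b m) (j : ℕ) :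
    Real.sqrt (∑ n ∈ Finset.Ico ((j+1)*k) ((j+1)*k+k), b n ^ 2)
      ≤ (∑ n ∈ Finset.Ico (j*k) (j*k+k), b n) / Real.sqrt k := by
  set c := b ((j+1)*k) with hc
  have hc0 : 0 ≤ c := hb0 _
  have hkR : (0:ℝ) < Real.sqrt k := Real.sqrt_pos.mpr (by exact_mod_cast hk)
  have h1 : (∑ n ∈ Finset.Ico ((j+1)*k) ((j+1)*k+k), b n ^ 2) ≤ (k:ℝ) * c ^ 2 := by
    calc (∑ n ∈ Finset.Ico ((j+1)*k) ((j+1)*k+k), b n ^ 2)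
        ≤ ∑ _n ∈ Finset.Ico ((j+1)*k) ((j+1)*k+k), c ^ 2 := by
          apply Finset.sum_le_sum
          intro n hn
          exact pow_le_pow_left₀ (hb0 n) (hmono (Finset.mem_Ico.mp hn).1) 2
      _ = (k:ℝ) * c ^ 2 := by
          rw [Finset.sum_const, Nat.card_Ico, nsmul_eq_mul]
          congr 2
          omega
  have h2 : (k:ℝ) * c ≤ ∑ n ∈ Finset.Ico (j*k) (j*k+k), b n := by
    calc (k:ℝ) * c = ∑ _n ∈ Finset.Ico (j*k) (j*k+k), c := by
          rw [Finset.sum_const, Nat.card_Ico, nsmul_eq_mul]; congr 2; omega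
      _ ≤ ∑ n ∈ Finset.Ico (j*k) (j*k+k), b n := by
          apply Finset.sum_le_sum
          intro n hn
          apply hmono
          have h := (Finset.mem_Ico.mp hn).2
          have : (j+1)*k = j*k+k := by ring
          omega
  calc Real.sqrt (∑ n ∈ Finset.Ico ((j+1)*k) ((j+1)*k+k), b n ^ 2)
      ≤ Real.sqrt ((k:ℝ) * c ^ 2) := Real.sqrt_le_sqrt h1
    _ = Real.sqrt k * c := by
        rw [Real.sqrt_mul (by positivity), Real.sqrt_sq hc0]
    _ ≤ (∑ n ∈ Finset.Ico (j*k) (j*k+k), b n) / Real.sqrt k := by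
        rw [le_div_iff₀ hkR, mul_comm (Real.sqrt k) c, mul_assoc,
          Real.mul_self_sqrt (by positivity)]
        rw [mul_comm]
        exact h2

lemma keyK {k : ℕ} (hk : 1 ≤ k) (p : ℕ) (b : ℕ → ℝ) (hb0 : ∀ n, 0 ≤ b n)
    (hmono : ∀ ⦃m n : ℕ⦄, m ≤ n → b n ≤ b m) :
    ∑ j ∈ range p, Real.sqrt (∑ n ∈ Finset.Ico (j*k) (j*k+k), b n ^ 2)
      ≤ Real.sqrt (∑ n ∈ range (p*k), b n ^ 2) + (∑ n ∈ range (p*k), b n) / Real.sqrt k := by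
  have hkR : (0:ℝ) < Real.sqrt k := Real.sqrt_pos.mpr (by exact_mod_cast hk)
  rcases Nat.eq_zero_or_pos p with rfl | hp
  · simp
  obtain ⟨q, rfl⟩ : ∃ q, p = q+1 := ⟨p-1, by omega⟩
  rw [Finset.sum_range_succ']
  have hA : Real.sqrt (∑ n ∈ Finset.Ico (0*k) (0*k+k), b n ^ 2)
      ≤ Real.sqrt (∑ n ∈ range ((q+1)*k), b n ^ 2) := by
    apply Real.sqrt_le_sqrt
    apply Finset.sum_le_sum_of_subset_of_nonneg
    · intro n hn
      rw [Finset.mem_Ico] at hn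
      rw [Finset.mem_range]
      have : k ≤ (q+1)*k := Nat.le_mul_of_pos_left k (by omega)
      omega
    · intro n _ _; positivity
  have hB : ∑ j ∈ range q, Real.sqrt (∑ n ∈ Finset.Ico ((j+1)*k) ((j+1)*k+k), b n ^ 2)
      ≤ (∑ n ∈ range ((q+1)*k), b n) / Real.sqrt k := by
    calc ∑ j ∈ range q, Real.sqrt (∑ n ∈ Finset.Ico ((j+1)*k) ((j+1)*k+k), b n ^ 2)
        ≤ ∑ j ∈ range q, (∑ n ∈ Finset.Ico (j*k) (j*k+k), b n) / Real.sqrt k :=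
          Finset.sum_le_sum fun j _ => block_sqrt_le hk b hb0 hmono j
      _ = (∑ n ∈ range (q*k), b n) / Real.sqrt k := by
          rw [← Finset.sum_div, blocks_cover]
      _ ≤ (∑ n ∈ range ((q+1)*k), b n) / Real.sqrt k := by
          gcongr
          · exact fun i _ _ => hb0 i
          · omega
  linarith

lemma div_eq_iff'' {k n j : ℕ} (hk : 0 < k) : n / k = j ↔ j*k ≤ n ∧ n < j*k + k := by
  constructor
  · rintro rfl
    refine ⟨Nat.div_mul_le_self n k, ?_⟩
    have h2 := (Nat.div_lt_iff_lt_mul hk).mp (Nat.lt_succ_self (n/k))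
    nlinarith
  · rintro ⟨h1, h2⟩
    have ha : j ≤ n / k := (Nat.le_div_iff_mul_le hk).mpr h1
    have hb : n / k < j + 1 := (Nat.div_lt_iff_lt_mul hk).mpr (by nlinarith)
    omega

lemma decompose {p k : ℕ} (hk : 1 ≤ k) (u : Fin p → ℝ) :
    ∃ w : ℕ → (Fin p → ℝ),
      (∀ j, kSparse k (w j)) ∧ (u = ∑ j ∈ range p, w j) ∧
      ∑ j ∈ range p, Real.sqrt (∑ i, (w j i)^2)
        ≤ Real.sqrt (∑ i, (u i)^2) + (∑ i, |u i|) / Real.sqrt k := by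
  have hk0 : 0 < k := hk
  set σ := Tuple.sort (fun i : Fin p => -|u i|) with hσ
  have hsort : Monotone ((fun i : Fin p => -|u i|) ∘ σ) := Tuple.monotone_sort _
  set b : ℕ → ℝ := fun n => if h : n < p then |u (σ ⟨n, h⟩)| else 0 with hbdef
  have hb0 : ∀ n, 0 ≤ b n := by
    intro n; simp only [hbdef]; split
    · exact abs_nonneg _
    · exact le_refl 0
  have hbv : ∀ (n : Fin p), b ↑n = |u (σ n)| := by
    intro n; simp only [hbdef, n.isLt, dif_pos, Fin.eta]
  have hmono : ∀ ⦃m n : ℕ⦄, m ≤ n → b n ≤ b m := by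
    intro m n hmn
    by_cases hn : n < p
    · have hm : m < p := lt_of_le_of_lt hmn hn
      simp only [hbdef, dif_pos hn, dif_pos hm]
      have := hsort (show (⟨m, hm⟩ : Fin p) ≤ ⟨n, hn⟩ from hmn)
      simpa using this
    · simp only [hbdef, dif_neg hn]
      exact hb0 m
  set B : ℕ → Finset (Fin p) := fun j => univ.filter (fun i => ((σ.symm i : ℕ) / k = j))
    with hBdef
  set w : ℕ → Fin p → ℝ := fun j i => if i ∈ B j then u i else 0 with hwdef
  have hcard : ∀ j, (B j).card ≤ k := by
    intro j
    have : (B j).card ≤ (univ : Finset (Fin k)).card := by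
      apply Finset.card_le_card_of_injOn (fun i => (⟨(σ.symm i : ℕ) % k, Nat.mod_lt _ hk0⟩ : Fin k))
      · intro i _; exact Finset.mem_univ _
      · intro i₁ h₁ i₂ h₂ hmod
        simp only [hBdef, Finset.mem_coe, Finset.mem_filter] at h₁ h₂
        have hm : (σ.symm i₁ : ℕ) % k = (σ.symm i₂ : ℕ) % k := by
          simpa [Fin.mk.injEq] using hmod
        have : (σ.symm i₁ : ℕ) = (σ.symm i₂ : ℕ) := by
          have e1 := Nat.div_add_mod (σ.symm i₁ : ℕ) k
          have e2 := Nat.div_add_mod (σ.symm i₂ : ℕ) k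
          rw [h₁.2, hm] at e1
          rw [h₂.2] at e2
          omega
        have := Fin.val_injective this
        exact σ.symm.injective this
    simpa using this
  refine ⟨w, ?_, ?_, ?_⟩
  · intro j
    exact ⟨B j, hcard j, fun i hi => if_neg hi⟩
  · funext i
    rw [Finset.sum_apply]
    have key : ∀ j, w j i = if j = (σ.symm i : ℕ)/k then u i else 0 := by
      intro j
      simp only [hwdef, hBdef, Finset.mem_filter, Finset.mem_univ, true_and]
      by_cases h : ((σ.symm i : ℕ)/k = j)
      · simp [h]
      · rw [if_neg h, if_neg (fun hj => h hj.symm)]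
    rw [Finset.sum_congr rfl (fun j _ => key j), Finset.sum_ite_eq' (range p)]
    rw [if_pos]
    rw [Finset.mem_range]
    exact lt_of_le_of_lt (Nat.div_le_self _ _) (σ.symm i).isLt
  · have hblock : ∀ j, (∑ i, (w j i)^2) = ∑ n ∈ Finset.Ico (j*k) (j*k+k), b n ^ 2 := by
      intro j
      have e1 : (∑ i, (w j i)^2)
          = ∑ i : Fin p, (if ((σ.symm i : ℕ)/k = j) then |u i|^2 else 0) := by
        apply Finset.sum_congr rfl
        intro i _
        simp only [hwdef, hBdef, Finset.mem_filter, Finset.mem_univ, true_and]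
        split_ifs <;> simp [sq_abs]
      have e2 : (∑ i : Fin p, (if ((σ.symm i : ℕ)/k = j) then |u i|^2 else 0))
          = ∑ i : Fin p, (fun n : ℕ => if n/k = j then b n^2 else 0) ↑i := by
        rw [← Equiv.sum_comp σ (fun i => if ((σ.symm i : ℕ)/k = j) then |u i|^2 else 0)]
        apply Finset.sum_congr rfl
        intro i _
        simp only [Equiv.symm_apply_apply, hbv, sq_abs]
      have e3 : (∑ i : Fin p, (fun n : ℕ => if n/k = j then b n^2 else 0) ↑i)
          = ∑ n ∈ range p, (if n/k = j then b n^2 else 0) :=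
        Fin.sum_univ_eq_sum_range (fun n : ℕ => if n/k = j then b n^2 else 0) p
      rw [e1, e2, e3, ← Finset.sum_filter]
      apply Finset.sum_subset
      · intro n hn
        simp only [Finset.mem_filter, Finset.mem_range] at hn
        rw [Finset.mem_Ico]
        have := (div_eq_iff'' hk0).mp hn.2
        omega
      · intro n hn hnot
        rw [Finset.mem_Ico] at hn
        have hdk : n / k = j := (div_eq_iff'' hk0).mpr ⟨hn.1, hn.2⟩
        have hnp : ¬ n < p := by
          intro hlt
          exact hnot (Finset.mem_filter.mpr ⟨Finset.mem_range.mpr hlt, hdk⟩)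
        have : b n = 0 := by simp only [hbdef, dif_neg hnp]
        rw [this]; ring
    have hext : ∀ f : ℕ → ℝ, (∀ n, ¬ n < p → f n = 0) →
        ∑ n ∈ range (p*k), f n = ∑ n ∈ range p, f n := by
      intro f hf
      symm
      apply Finset.sum_subset
      · exact Finset.range_subset_range.mpr (Nat.le_mul_of_pos_right p hk0)
      · intro n _ hn
        exact hf n (by simpa using hn)
    have hsq : ∑ n ∈ range (p*k), b n ^ 2 = ∑ i, (u i)^2 := by
      rw [hext _ (fun n hn => by simp only [hbdef, dif_neg hn]; ring)]
      rw [← Fin.sum_univ_eq_sum_range (fun n => b n ^ 2) p]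
      rw [← Equiv.sum_comp σ (fun i => (u i)^2)]
      apply Finset.sum_congr rfl
      intro i _
      rw [hbv, sq_abs]
    have hl1 : ∑ n ∈ range (p*k), b n = ∑ i, |u i| := by
      rw [hext _ (fun n hn => by simp only [hbdef, dif_neg hn])]
      rw [← Fin.sum_univ_eq_sum_range (fun n => b n) p]
      rw [← Equiv.sum_comp σ (fun i => |u i|)]
      apply Finset.sum_congr rfl
      intro i _
      rw [hbv]
    calc ∑ j ∈ range p, Real.sqrt (∑ i, (w j i)^2)
        = ∑ j ∈ range p, Real.sqrt (∑ n ∈ Finset.Ico (j*k) (j*k+k), b n ^ 2) := by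
          apply Finset.sum_congr rfl; intro j _; rw [hblock]
      _ ≤ Real.sqrt (∑ n ∈ range (p*k), b n ^ 2) + (∑ n ∈ range (p*k), b n) / Real.sqrt k :=
          keyK hk p b hb0 hmono
      _ = Real.sqrt (∑ i, (u i)^2) + (∑ i, |u i|) / Real.sqrt k := by rw [hsq, hl1]


lemma sparseSet_bddAbove (p k : ℕ) (M : Matrix (Fin p) (Fin p) ℝ) :
    BddAbove {x : ℝ | ∃ u v : Fin p → ℝ, (∑ i, (u i) ^ 2) ≤ 1 ∧ (∑ i, (v i) ^ 2) ≤ 1 ∧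
      kSparse k u ∧ kSparse k v ∧ x = u ⬝ᵥ M.mulVec v} := by
  refine ⟨∑ i, ∑ j, |M i j|, ?_⟩
  rintro x ⟨u, v, hu, hv, -, -, rfl⟩
  have habs : ∀ (z : Fin p → ℝ), (∑ i, (z i)^2) ≤ 1 → ∀ i, |z i| ≤ 1 := by
    intro z hz i
    rw [← sq_le_one_iff_abs_le_one]
    refine le_trans ?_ hz
    exact Finset.single_le_sum (fun i _ => sq_nonneg (z i)) (Finset.mem_univ i)
  calc u ⬝ᵥ M.mulVec v ≤ |u ⬝ᵥ M.mulVec v| := le_abs_self _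
    _ ≤ ∑ i, |u i * (M.mulVec v) i| := Finset.abs_sum_le_sum_abs _ _
    _ ≤ ∑ i, ∑ j, |M i j| := by
        apply Finset.sum_le_sum
        intro i _
        rw [abs_mul]
        calc |u i| * |(M.mulVec v) i| ≤ 1 * |(M.mulVec v) i| := by
              apply mul_le_mul_of_nonneg_right (habs u hu i) (abs_nonneg _)
          _ = |∑ j, M i j * v j| := by rw [one_mul]; rfl
          _ ≤ ∑ j, |M i j * v j| := Finset.abs_sum_le_sum_abs _ _
          _ ≤ ∑ j, |M i j| := by
              apply Finset.sum_le_sum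
              intro j _
              rw [abs_mul]
              calc |M i j| * |v j| ≤ |M i j| * 1 :=
                    mul_le_mul_of_nonneg_left (habs v hv j) (abs_nonneg _)
                _ = |M i j| := mul_one _

lemma sparseOpNorm_nonneg (p k : ℕ) (M : Matrix (Fin p) (Fin p) ℝ) :
    0 ≤ sparseOpNorm p k M := by
  apply le_csSup (sparseSet_bddAbove p k M)
  refine ⟨0, 0, by simp, by simp, ⟨∅, by simp⟩, ⟨∅, by simp⟩, by simp⟩

lemma pair_bound (p k : ℕ) (M : Matrix (Fin p) (Fin p) ℝ) (x y : Fin p → ℝ)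
    (hx : kSparse k x) (hy : kSparse k y) :
    x ⬝ᵥ M.mulVec y ≤
      Real.sqrt (∑ i, (x i)^2) * Real.sqrt (∑ i, (y i)^2) * sparseOpNorm p k M := by
  have hzero : ∀ (z : Fin p → ℝ), (∑ i, (z i)^2) = 0 → z = 0 := by
    intro z hz
    funext i
    have := (Finset.sum_eq_zero_iff_of_nonneg (fun i _ => sq_nonneg (z i))).mp hz i
      (Finset.mem_univ i)
    exact pow_eq_zero_iff (by norm_num) |>.mp this
  have hxs : 0 ≤ ∑ i, (x i)^2 := Finset.sum_nonneg fun i _ => sq_nonneg _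
  have hys : 0 ≤ ∑ i, (y i)^2 := Finset.sum_nonneg fun i _ => sq_nonneg _
  rcases eq_or_lt_of_le hxs with hx0 | hx0
  · have : x = 0 := hzero x hx0.symm
    subst this
    simp [← hx0]
  rcases eq_or_lt_of_le hys with hy0 | hy0
  · have : y = 0 := hzero y hy0.symm
    subst this
    simp [← hy0]
  set a := Real.sqrt (∑ i, (x i)^2) with ha
  set c := Real.sqrt (∑ i, (y i)^2) with hc
  have ha0 : 0 < a := Real.sqrt_pos.mpr hx0
  have hc0 : 0 < c := Real.sqrt_pos.mpr hy0
  set x' := a⁻¹ • x with hx'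
  set y' := c⁻¹ • y with hy'
  have hmemle : x' ⬝ᵥ M.mulVec y' ≤ sparseOpNorm p k M := by
    apply le_csSup (sparseSet_bddAbove p k M)
    refine ⟨x', y', ?_, ?_, ?_, ?_, rfl⟩
    · have : ∑ i, (x' i)^2 = (a⁻¹)^2 * ∑ i, (x i)^2 := by
        rw [Finset.mul_sum]; apply Finset.sum_congr rfl; intro i _
        simp [hx', mul_pow]
      rw [this, inv_pow, ha, Real.sq_sqrt hxs, inv_mul_cancel₀ (ne_of_gt hx0)]
    · have : ∑ i, (y' i)^2 = (c⁻¹)^2 * ∑ i, (y i)^2 := by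
        rw [Finset.mul_sum]; apply Finset.sum_congr rfl; intro i _
        simp [hy', mul_pow]
      rw [this, inv_pow, hc, Real.sq_sqrt hys, inv_mul_cancel₀ (ne_of_gt hy0)]
    · obtain ⟨s, hs, hsupp⟩ := hx
      exact ⟨s, hs, fun i hi => by simp [hx', hsupp i hi]⟩
    · obtain ⟨s, hs, hsupp⟩ := hy
      exact ⟨s, hs, fun i hi => by simp [hy', hsupp i hi]⟩
  have hxx : x = a • x' := by
    rw [hx', smul_smul, mul_inv_cancel₀ (ne_of_gt ha0), one_smul]
  have hyy : y = c • y' := by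
    rw [hy', smul_smul, mul_inv_cancel₀ (ne_of_gt hc0), one_smul]
  calc x ⬝ᵥ M.mulVec y = a * (c * (x' ⬝ᵥ M.mulVec y')) := by
        nth_rewrite 1 [hxx, hyy]
        rw [smul_dotProduct, Matrix.mulVec_smul, dotProduct_smul]
        simp [smul_eq_mul]
    _ ≤ a * (c * sparseOpNorm p k M) := by
        apply mul_le_mul_of_nonneg_left _ (le_of_lt ha0)
        exact mul_le_mul_of_nonneg_left hmemle (le_of_lt hc0)
    _ = a * c * sparseOpNorm p k M := by ring

lemma sum_dot_sum (p : ℕ) (M : Matrix (Fin p) (Fin p) ℝ) (s t : Finset ℕ)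
    (w z : ℕ → Fin p → ℝ) :
    (∑ j ∈ s, w j) ⬝ᵥ M.mulVec (∑ l ∈ t, z l)
      = ∑ j ∈ s, ∑ l ∈ t, (w j) ⬝ᵥ M.mulVec (z l) := by
  have hmv : M.mulVec (∑ l ∈ t, z l) = ∑ l ∈ t, M.mulVec (z l) := by
    funext i
    simp only [Matrix.mulVec, dotProduct, Finset.sum_apply, Finset.mul_sum]
    rw [Finset.sum_comm]
  have dsl : ∀ x : Fin p → ℝ, (∑ j ∈ s, w j) ⬝ᵥ x = ∑ j ∈ s, (w j) ⬝ᵥ x := by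
    intro x
    simp only [dotProduct, Finset.sum_apply, Finset.sum_mul]
    rw [Finset.sum_comm]
  have dsr : ∀ x : Fin p → ℝ, x ⬝ᵥ (∑ l ∈ t, M.mulVec (z l)) = ∑ l ∈ t, x ⬝ᵥ M.mulVec (z l) := by
    intro x
    simp only [dotProduct, Finset.sum_apply, Finset.mul_sum]
    rw [Finset.sum_comm]
  rw [hmv, dsl]
  exact Finset.sum_congr rfl fun j _ => dsr (w j)

lemma one_sided (p k : ℕ) (hk : 1 ≤ k) (M : Matrix (Fin p) (Fin p) ℝ) (u v : Fin p → ℝ) :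
    u ⬝ᵥ M.mulVec v ≤
      (Real.sqrt (∑ i, (u i) ^ 2) + (∑ i, |u i|) / Real.sqrt k) *
        (Real.sqrt (∑ i, (v i) ^ 2) + (∑ i, |v i|) / Real.sqrt k) *
        sparseOpNorm p k M := by
  obtain ⟨w, hwsp, hwu, hwbound⟩ := decompose hk u
  obtain ⟨z, hzsp, hzv, hzbound⟩ := decompose hk v
  set N := sparseOpNorm p k M with hN
  have hN0 : 0 ≤ N := sparseOpNorm_nonneg p k M
  set Au := Real.sqrt (∑ i, (u i) ^ 2) + (∑ i, |u i|) / Real.sqrt k with hAu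
  set Av := Real.sqrt (∑ i, (v i) ^ 2) + (∑ i, |v i|) / Real.sqrt k with hAv
  have hSw0 : 0 ≤ ∑ j ∈ Finset.range p, Real.sqrt (∑ i, (w j i)^2) :=
    Finset.sum_nonneg fun j _ => Real.sqrt_nonneg _
  have hSz0 : 0 ≤ ∑ l ∈ Finset.range p, Real.sqrt (∑ i, (z l i)^2) :=
    Finset.sum_nonneg fun l _ => Real.sqrt_nonneg _
  have hAu0 : 0 ≤ Au := by positivity
  calc u ⬝ᵥ M.mulVec v
      = ∑ j ∈ Finset.range p, ∑ l ∈ Finset.range p, (w j) ⬝ᵥ M.mulVec (z l) := by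
        rw [hwu, hzv]; exact sum_dot_sum p M _ _ w z
    _ ≤ ∑ j ∈ Finset.range p, ∑ l ∈ Finset.range p,
          Real.sqrt (∑ i, (w j i)^2) * Real.sqrt (∑ i, (z l i)^2) * N := by
        apply Finset.sum_le_sum
        intro j _
        apply Finset.sum_le_sum
        intro l _
        exact pair_bound p k M (w j) (z l) (hwsp j) (hzsp l)
    _ = (∑ j ∈ Finset.range p, Real.sqrt (∑ i, (w j i)^2))
          * (∑ l ∈ Finset.range p, Real.sqrt (∑ i, (z l i)^2)) * N := by
        rw [Finset.sum_mul, Finset.sum_mul]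
        apply Finset.sum_congr rfl
        intro j _
        rw [Finset.mul_sum, Finset.sum_mul]
    _ ≤ Au * Av * N := by
        apply mul_le_mul_of_nonneg_right _ hN0
        exact mul_le_mul hwbound hzbound hSz0 hAu0

/-- Lemma 4.9: for any matrix `M`, vectors `u, v` and `k ≥ 1`,
`|uᵀMv| ≤ (‖u‖₂ + ‖u‖₁/√k)(‖v‖₂ + ‖v‖₁/√k)·‖M‖_{S_k}`. -/
theorem stmt6 (p k : ℕ) (hk : 1 ≤ k) (M : Matrix (Fin p) (Fin p) ℝ) (u v : Fin p → ℝ) :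
    |u ⬝ᵥ M.mulVec v| ≤
      (Real.sqrt (∑ i, (u i) ^ 2) + (∑ i, |u i|) / Real.sqrt k) *
        (Real.sqrt (∑ i, (v i) ^ 2) + (∑ i, |v i|) / Real.sqrt k) *
        sparseOpNorm p k M := by
  rw [abs_le]
  constructor
  · have h := one_sided p k hk M (-u) v
    have hneg : (-u) ⬝ᵥ M.mulVec v = -(u ⬝ᵥ M.mulVec v) := neg_dotProduct u _
    have hsq : (∑ i, ((-u) i) ^ 2) = ∑ i, (u i) ^ 2 := by
      apply Finset.sum_congr rfl; intro i _; simp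
    have habs : (∑ i, |(-u) i|) = ∑ i, |u i| := by
      apply Finset.sum_congr rfl; intro i _; simp
    rw [hneg, hsq, habs] at h
    linarith
  · exact one_sided p k hk M u v
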